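/- Let d ≥ 2 and suppose ℂ^d admits a family of d+1 mutually unbiased orthonormal bases, with rank-one projections Π_{nk} for n = 1,…,d+1 and k = 1,…,d. Then every Hermitian d×d matrix ρ can be written as ρ = Σ_{n=1}^{d+1} Σ_{k=1}^{d} λ_{nk} Π_{nk} for some real coefficients λ_{nk}; in other words, the d(d+1) projections Π_{nk} span the real vector space of Hermitian d×d matrices. -/

import Mathlib

open scoped BigOperators

/-- Rank-one orthogonal projection `|v⟩⟨v|` onto a vector `v ∈ ℂ^d`, as a matrix. -/
noncomputable def proj {d : ℕ} (v : EuclideanSpace ℂ (Fin d)) : Matrix (Fin d) (Fin d) ℂ :=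
  Matrix.of fun i j => v i * star (v j)

/-- A family of orthonormal bases of `ℂ^d` is mutually unbiased if
`|⟨e n k, e m l⟩|² = 1/d` for all `n ≠ m` and all `k, l`. -/
def MutuallyUnbiased {d N : ℕ} (e : Fin N → Fin d → EuclideanSpace ℂ (Fin d)) : Prop :=
  ∀ n m : Fin N, n ≠ m → ∀ k l : Fin d,
    ‖(inner ℂ (e n k) (e m l) : ℂ)‖ ^ 2 = 1 / d

open Matrix

lemma trace_pp {d : ℕ} (u v : EuclideanSpace ℂ (Fin d)) :
    Matrix.trace (proj u * proj v) = (inner ℂ u v : ℂ) * star (inner ℂ u v : ℂ) := by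
  simp only [Matrix.trace, Matrix.diag, Matrix.mul_apply, proj, Matrix.of_apply,
    PiLp.inner_apply, RCLike.inner_apply, star_sum, StarMul.star_mul, star_star,
    Finset.sum_mul_sum, starRingEnd_apply]
  rw [Finset.sum_comm]
  exact Finset.sum_congr rfl fun i _ => Finset.sum_congr rfl fun j _ => by ring

lemma trace_pp' {d : ℕ} (u v : EuclideanSpace ℂ (Fin d)) :
    Matrix.trace (proj u * proj v) = ((‖(inner ℂ u v : ℂ)‖ ^ 2 : ℝ) : ℂ) := by
  rw [trace_pp, show (star (inner ℂ u v : ℂ)) = (starRingEnd ℂ) (inner ℂ u v : ℂ) from rfl,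
    Complex.mul_conj', Complex.ofReal_pow]

lemma trace_p {d : ℕ} (u : EuclideanSpace ℂ (Fin d)) :
    Matrix.trace (proj u) = (inner ℂ u u : ℂ) := by
  simp only [Matrix.trace, Matrix.diag, proj, Matrix.of_apply, PiLp.inner_apply,
    RCLike.inner_apply, starRingEnd_apply]

lemma proj_herm {d : ℕ} (u : EuclideanSpace ℂ (Fin d)) : (proj u)ᴴ = proj u := by
  ext i j; simp [proj, Matrix.conjTranspose_apply, mul_comm]

lemma sum_proj {d : ℕ} (v : Fin d → EuclideanSpace ℂ (Fin d)) (h : Orthonormal ℂ v) :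
    ∑ k, proj (v k) = 1 := by
  set U : Matrix (Fin d) (Fin d) ℂ := Matrix.of fun i k => v k i with hU
  have h1 : Uᴴ * U = 1 := by
    ext k l
    have := (orthonormal_iff_ite.mp h) k l
    simp only [PiLp.inner_apply, RCLike.inner_apply, starRingEnd_apply] at this
    simp [Matrix.mul_apply, Matrix.conjTranspose_apply, hU, Matrix.one_apply, ← this, mul_comm]
  have h2 : U * Uᴴ = 1 := mul_eq_one_comm.mp h1
  rw [← h2]
  ext i j
  simp [Matrix.mul_apply, Matrix.conjTranspose_apply, hU, proj, Matrix.sum_apply]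

theorem stmt_2 (d : ℕ) (hd : 2 ≤ d)
    (e : Fin (d + 1) → Fin d → EuclideanSpace ℂ (Fin d))
    (horth : ∀ n, Orthonormal ℂ (e n))
    (hmub : MutuallyUnbiased e)
    (ρ : Matrix (Fin d) (Fin d) ℂ) (hρ : ρ.IsHermitian) :
    ∃ lam : Fin (d + 1) → Fin d → ℝ,
      ρ = ∑ n : Fin (d + 1), ∑ k : Fin d, (lam n k : ℂ) • proj (e n k) := by
  have hd0 : (d : ℂ) ≠ 0 := Nat.cast_ne_zero.mpr (by omega)
  set g : Fin (d + 1) × Fin d → Matrix (Fin d) (Fin d) ℂ := fun p => proj (e p.1 p.2) with hg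
  set W : Submodule ℂ (Matrix (Fin d) (Fin d) ℂ) := Submodule.span ℂ (Set.range g) with hW
  have hgW : ∀ p, g p ∈ W := fun p => Submodule.subset_span ⟨p, rfl⟩
  have hone : (1 : Matrix (Fin d) (Fin d) ℂ) ∈ W := by
    rw [← sum_proj (e 0) (horth 0)]
    exact Submodule.sum_mem _ fun k _ => hgW (0, k)
  have htr1 : ∀ (n m : Fin (d+1)) (k l : Fin d), n ≠ m →
      Matrix.trace (proj (e m l) * proj (e n k)) = (d : ℂ)⁻¹ := by
    intro n m k l hne
    rw [trace_pp', hmub m n hne.symm l k]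
    push_cast
    rw [one_div]
  have htr2 : ∀ (n : Fin (d+1)) (k l : Fin d),
      Matrix.trace (proj (e n l) * proj (e n k)) = if l = k then 1 else 0 := by
    intro n k l
    rw [trace_pp, orthonormal_iff_ite.mp (horth n) l k]
    split <;> simp
  have htrp : ∀ (n : Fin (d+1)) (k : Fin d), Matrix.trace (proj (e n k)) = 1 := by
    intro n k
    rw [trace_p, orthonormal_iff_ite.mp (horth n) k k]
    simp
  have hd1 : d - 1 < d := by omega
  let emb : Fin (d-1) → Fin d := fun k => ⟨k.1, by omega⟩
  have embinj : Function.Injective emb := fun a b h =>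
    Fin.ext (by simpa [emb] using congrArg Fin.val h)
  let llast : Fin d := ⟨d - 1, hd1⟩
  have hlast : ∀ k, llast ≠ emb k := by
    intro k h
    have := congrArg Fin.val h
    simp only [llast, emb] at this
    omega
  let f : Option (Fin (d+1) × Fin (d-1)) → Matrix (Fin d) (Fin d) ℂ := fun i =>
    i.elim 1 (fun p => proj (e p.1 (emb p.2)) - (d : ℂ)⁻¹ • 1)
  have hfW : ∀ i, f i ∈ W := by
    rintro (_ | p)
    · exact hone
    · exact Submodule.sub_mem _ (hgW (p.1, emb p.2)) (Submodule.smul_mem _ _ hone)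
  have hindep : LinearIndependent ℂ f := by
    rw [Fintype.linearIndependent_iff]
    intro c hc
    have key : ∀ X : Matrix (Fin d) (Fin d) ℂ,
        ∑ i, c i * Matrix.trace (X * f i) = 0 := by
      intro X
      have h := congrArg (fun A => Matrix.trace (X * A)) hc
      simp only [Matrix.mul_sum, Matrix.trace_sum, Matrix.mul_smul, Matrix.trace_smul,
        smul_eq_mul, Matrix.mul_zero, Matrix.trace_zero] at h
      exact h
    have hnone : c none = 0 := by
      have h := key 1
      rw [Fintype.sum_option] at h
      have e2 : ∀ p : Fin (d+1) × Fin (d-1),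
          c (some p) * Matrix.trace ((1 : Matrix (Fin d) (Fin d) ℂ) * f (some p)) = 0 := by
        intro p
        simp only [f, Option.elim, Matrix.one_mul, Matrix.trace_sub, Matrix.trace_smul,
          htrp, Matrix.trace_one, smul_eq_mul, Fintype.card_fin]
        rw [inv_mul_cancel₀ hd0, sub_self, mul_zero]
      rw [Finset.sum_eq_zero (fun p _ => e2 p), add_zero] at h
      simp only [f, Option.elim, Matrix.one_mul, Matrix.trace_one, Fintype.card_fin] at h
      exact (mul_eq_zero.mp h).resolve_right hd0
    have hsome : ∀ (m : Fin (d+1)) (l : Fin d),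
        ∑ k : Fin (d-1), c (some (m, k)) * ((if l = emb k then 1 else 0) - (d:ℂ)⁻¹) = 0 := by
      intro m l
      have h := key (proj (e m l))
      rw [Fintype.sum_option, Fintype.sum_prod_type] at h
      simp only [f, Option.elim, hnone, zero_mul, zero_add, Matrix.mul_sub, Matrix.trace_sub,
        Matrix.mul_smul, Matrix.trace_smul, Matrix.mul_one, smul_eq_mul, htrp, mul_one] at h
      rw [Finset.sum_eq_single m
        (fun n _ hnm => Finset.sum_eq_zero (fun k _ => by
          simp only [htr1 n m (emb k) l hnm, sub_self, mul_zero]))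
        (fun habs => absurd (Finset.mem_univ m) habs)] at h
      simp only [htr2] at h
      exact h
    have hS : ∀ m : Fin (d+1), ∑ k : Fin (d-1), c (some (m, k)) = 0 := by
      intro m
      have h := hsome m llast
      simp only [hlast, if_false, zero_sub, mul_neg, Finset.sum_neg_distrib, neg_eq_zero,
        ← Finset.sum_mul] at h
      exact (mul_eq_zero.mp h).resolve_right (inv_ne_zero hd0)
    intro i
    match i with
    | none => exact hnone
    | some (m, k0) =>
      have h := hsome m (emb k0)
      have hsplit : ∀ k : Fin (d-1),
          c (some (m, k)) * ((if emb k0 = emb k then 1 else 0) - (d:ℂ)⁻¹)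
          = (if k0 = k then c (some (m, k)) else 0) - c (some (m, k)) * (d:ℂ)⁻¹ := by
        intro k
        by_cases hk : k0 = k
        · subst hk; rw [if_pos rfl, if_pos rfl]; ring
        · rw [if_neg (fun hh => hk (embinj hh)), if_neg hk]; ring
      rw [Finset.sum_congr rfl (fun k _ => hsplit k), Finset.sum_sub_distrib,
        Finset.sum_ite_eq Finset.univ k0 (fun k => c (some (m, k))),
        if_pos (Finset.mem_univ k0), ← Finset.sum_mul, hS m, zero_mul, sub_zero] at h
      exact h
  have hcard : Fintype.card (Option (Fin (d+1) × Fin (d-1))) = d * d := by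
    obtain ⟨m, rfl⟩ : ∃ m, d = m + 2 := ⟨d - 2, by omega⟩
    have h21 : m + 2 - 1 = m + 1 := rfl
    simp only [Fintype.card_option, Fintype.card_prod, Fintype.card_fin, h21]
    ring
  have hrk : Module.finrank ℂ (Matrix (Fin d) (Fin d) ℂ) = d * d := by
    rw [Module.finrank_matrix]
    simp
  have hWT : W = ⊤ := by
    apply Submodule.eq_top_of_finrank_eq
    have hle : Module.finrank ℂ W ≤ d * d := hrk ▸ Submodule.finrank_le W
    have hge : d * d ≤ Module.finrank ℂ W := by
      let f' : Option (Fin (d+1) × Fin (d-1)) → W := fun i => ⟨f i, hfW i⟩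
      have hindep' : LinearIndependent ℂ f' :=
        LinearIndependent.of_comp W.subtype hindep
      have := hindep'.fintype_card_le_finrank
      rwa [hcard] at this
    rw [hrk]
    omega
  have hmem : ρ ∈ W := hWT ▸ Submodule.mem_top
  rw [hW, Submodule.mem_span_range_iff_exists_fun] at hmem
  obtain ⟨cc, hcc⟩ := hmem
  refine ⟨fun n k => (cc (n, k)).re, ?_⟩
  have hconj : ∑ p, (starRingEnd ℂ) (cc p) • g p = ρ := by
    have h := congrArg Matrix.conjTranspose hcc
    rw [Matrix.conjTranspose_sum, hρ.eq] at h
    rw [← h]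
    exact Finset.sum_congr rfl fun p _ => by
      show (starRingEnd ℂ) (cc p) • proj (e p.1 p.2) = (cc p • proj (e p.1 p.2))ᴴ
      rw [Matrix.conjTranspose_smul, proj_herm]
      rfl
  have hpt : ∀ p : Fin (d+1) × Fin d, (((cc p).re : ℂ)) • g p
      = (2⁻¹ : ℂ) • (cc p • g p + (starRingEnd ℂ) (cc p) • g p) := by
    intro p
    rw [← add_smul, Complex.add_conj, smul_smul]
    congr 1
    push_cast
    ring
  have hfinal : ∑ p : Fin (d+1) × Fin d, ((cc p).re : ℂ) • g p = ρ := by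
    rw [Finset.sum_congr rfl (fun p _ => hpt p), ← Finset.smul_sum, Finset.sum_add_distrib,
      hcc, hconj, ← two_smul ℂ ρ, smul_smul]
    norm_num
  calc ρ = ∑ p : Fin (d+1) × Fin d, ((cc p).re : ℂ) • g p := hfinal.symm
    _ = ∑ n : Fin (d+1), ∑ k : Fin d, ((cc (n, k)).re : ℂ) • g (n, k) :=
        Fintype.sum_prod_type _
    _ = ∑ n : Fin (d+1), ∑ k : Fin d, ((cc (n, k)).re : ℂ) • proj (e n k) := rfl
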